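/- arXiv:1301.2125 — 2 statements merged into one kernel-verified Lean document; each statement's English description precedes it below -/
import Mathlib

section
/- For 0 < q < 1 and complex z, ν with q^ν ∉ q^ℤ, the q-hypergeometric functions satisfy: ₀φ₁(;q^{ν+1};q,−q^{ν+1}z) · ₀φ₁(;q^{−ν};q,−q^{−ν}z) − (q^ν z/((1−q^ν)(1−q^{ν+1}))) · ₀φ₁(;q^{ν+2};q,−q^{ν+2}z) · ₀φ₁(;q^{−ν+1};q,−q^{−ν+1}z) = (−z;q)_∞. -/
open Classical

/-- q-Pochhammer symbol (a;q)_k. -/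
noncomputable def qP (a q : ℂ) (k : ℕ) : ℂ := ∏ j ∈ Finset.range k, (1 - a * q ^ j)

/-- Infinite q-Pochhammer symbol (a;q)_∞. -/
noncomputable def qPInf (a q : ℂ) : ℂ := ∏' j : ℕ, (1 - a * q ^ j)

/-- Basic hypergeometric series ₀φ₁(;b;q,z). -/
noncomputable def phi01 (b q z : ℂ) : ℂ :=
  ∑' k : ℕ, q ^ (k * (k - 1)) * z ^ k / (qP q q k * qP b q k)
open Filter

namespace Phi01Aux
noncomputable def T (b q w : ℂ) (k : ℕ) : ℂ :=
  q ^ (k * (k - 1)) * w ^ k / (qP q q k * qP b q k)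
lemma phi01_eq (b q w : ℂ) : phi01 b q w = ∑' k, T b q w k := rfl
lemma qP_succ (a q : ℂ) (k : ℕ) : qP a q (k + 1) = qP a q k * (1 - a * q ^ k) :=
  Finset.prod_range_succ _ _
lemma qP_succ' (a q : ℂ) (k : ℕ) : qP a q (k + 1) = (1 - a) * qP (q * a) q k := by
  unfold qP
  rw [Finset.prod_range_succ']
  simp only [pow_zero, mul_one]
  rw [mul_comm]
  congr 1
  exact Finset.prod_congr rfl fun j _ => by rw [pow_succ']; ring
lemma qP_ne_zero {a q : ℂ} (h : ∀ j : ℕ, 1 - a * q ^ j ≠ 0) (k : ℕ) : qP a q k ≠ 0 :=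
  Finset.prod_ne_zero_iff.2 fun j _ => h j
lemma exp_arith (k : ℕ) : (k + 1) * k = k * (k - 1) + 2 * k := by
  cases k with
  | zero => rfl
  | succ s => simp [Nat.succ_sub_one]; ring

variable {q : ℝ}

lemma qfac (hq0 : 0 < q) (hq1 : q < 1) (j : ℕ) : (1 : ℂ) - (q : ℂ) * (q : ℂ) ^ j ≠ 0 := by
  have h : (q : ℂ) * (q : ℂ) ^ j = ((q * q ^ j : ℝ) : ℂ) := by push_cast; ring
  rw [h, sub_ne_zero]
  intro hc
  have : (1 : ℝ) = q * q ^ j := by exact_mod_cast hc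
  nlinarith [pow_le_one₀ hq0.le hq1.le (n := j), pow_pos hq0 j]

lemma T_succ {b : ℂ} (hq0 : 0 < q) (hq1 : q < 1) (hb : ∀ j : ℕ, 1 - b * (q:ℂ) ^ j ≠ 0)
    (w : ℂ) (k : ℕ) :
    T b (q:ℂ) w (k + 1) =
      T b (q:ℂ) w k * ((q:ℂ) ^ (2 * k) * w / ((1 - (q:ℂ) * (q:ℂ) ^ k) * (1 - b * (q:ℂ) ^ k))) := by
  have hq := qfac hq0 hq1
  have hqk := qP_ne_zero hq k
  have hbk := qP_ne_zero hb k
  unfold T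
  rw [qP_succ, qP_succ, Nat.add_sub_cancel, exp_arith, pow_add, pow_succ]
  field_simp

lemma summable_T_norm (hq0 : 0 < q) (hq1 : q < 1) {b : ℂ}
    (hb : ∀ j : ℕ, 1 - b * (q:ℂ) ^ j ≠ 0) (w : ℂ) :
    Summable fun k => ‖T b (q:ℂ) w k‖ := by
  apply summable_of_ratio_norm_eventually_le (r := 1/2) (by norm_num)
  have hqlim : Tendsto (fun k : ℕ => q ^ k) atTop (nhds 0) :=
    tendsto_pow_atTop_nhds_zero_of_lt_one hq0.le hq1
  have h1 : ∀ᶠ k : ℕ in atTop, ‖b‖ * q ^ k ≤ 1/2 := by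
    have := hqlim.const_mul ‖b‖
    rw [mul_zero] at this
    exact this.eventually_le_const (by norm_num)
  have h2 : ∀ᶠ k : ℕ in atTop, ‖w‖ * q ^ k ≤ (1 - q)/4 := by
    have := hqlim.const_mul ‖w‖
    rw [mul_zero] at this
    exact this.eventually_le_const (by linarith)
  filter_upwards [h1, h2] with k hk1 hk2
  rw [norm_norm, norm_norm, T_succ hq0 hq1 hb w k, norm_mul]
  have hqpos : (0:ℝ) < q ^ k := pow_pos hq0 k
  have key : ‖(q:ℂ) ^ (2 * k) * w / ((1 - (q:ℂ) * (q:ℂ) ^ k) * (1 - b * (q:ℂ) ^ k))‖ ≤ 1/2 := by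
    rw [norm_div, norm_mul, norm_mul]
    have e1 : ‖(q:ℂ) ^ (2*k)‖ = q ^ (2*k) := by
      rw [norm_pow, Complex.norm_real, Real.norm_eq_abs, abs_of_pos hq0]
    have e2 : ‖(q:ℂ) * (q:ℂ) ^ k‖ = q * q ^ k := by
      rw [norm_mul, norm_pow, Complex.norm_real, Real.norm_eq_abs, abs_of_pos hq0]
    have e3 : ‖b * (q:ℂ) ^ k‖ = ‖b‖ * q ^ k := by
      rw [norm_mul, norm_pow, Complex.norm_real, Real.norm_eq_abs, abs_of_pos hq0]
    have d1 : (1 : ℝ) - q ≤ ‖(1:ℂ) - (q:ℂ) * (q:ℂ) ^ k‖ := by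
      have := norm_sub_norm_le (1:ℂ) ((q:ℂ) * (q:ℂ) ^ k)
      rw [norm_one, e2] at this
      have hpk : q * q ^ k ≤ q := by nlinarith [pow_le_one₀ hq0.le hq1.le (n := k)]
      linarith
    have d2 : (1:ℝ)/2 ≤ ‖(1:ℂ) - b * (q:ℂ) ^ k‖ := by
      have := norm_sub_norm_le (1:ℂ) (b * (q:ℂ) ^ k)
      rw [norm_one, e3] at this
      linarith
    have dn : ‖(q:ℂ) ^ (2*k)‖ * ‖w‖ ≤ (1-q)/4 := by
      rw [e1]
      have : q ^ (2*k) ≤ q ^ k := pow_le_pow_of_le_one hq0.le hq1.le (by omega)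
      have h0 : q ^ (2*k) * ‖w‖ ≤ q ^ k * ‖w‖ :=
        mul_le_mul_of_nonneg_right this (norm_nonneg w)
      calc q ^ (2*k) * ‖w‖ ≤ q ^ k * ‖w‖ := h0
        _ = ‖w‖ * q ^ k := by ring
        _ ≤ (1-q)/4 := hk2
    calc ‖(q:ℂ) ^ (2*k)‖ * ‖w‖ / (‖(1:ℂ) - (q:ℂ)*(q:ℂ)^k‖ * ‖(1:ℂ) - b*(q:ℂ)^k‖)
        ≤ ((1-q)/4) / ((1-q) * (1/2)) := by
          apply div_le_div₀ (by linarith) dn (by nlinarith)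
          exact mul_le_mul d1 d2 (by norm_num) (norm_nonneg _)
      _ = 1/2 := by
          rw [div_eq_div_iff (by nlinarith) (by norm_num)]
          ring
  calc ‖T b (q:ℂ) w k‖ * ‖_‖ ≤ ‖T b (q:ℂ) w k‖ * (1/2) :=
        mul_le_mul_of_nonneg_left key (norm_nonneg _)
    _ = 1/2 * ‖T b (q:ℂ) w k‖ := by ring

lemma summable_T (hq0 : 0 < q) (hq1 : q < 1) {b : ℂ}
    (hb : ∀ j : ℕ, 1 - b * (q:ℂ) ^ j ≠ 0) (w : ℂ) :
    Summable (T b (q:ℂ) w) :=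
  (summable_T_norm hq0 hq1 hb w).of_norm


lemma T_mul_w (b q w : ℂ) (k : ℕ) : T b q w k = T b q 1 k * w ^ k := by
  unfold T; rw [one_pow]; ring

lemma T_zero (b q w : ℂ) : T b q w 0 = 1 := by simp [T, qP]

/-- Contiguous relation R1 (termwise part). -/
lemma R1_term {b : ℂ} (hq0 : 0 < q) (hq1 : q < 1) (hb : ∀ j : ℕ, 1 - b * (q:ℂ) ^ j ≠ 0)
    (w : ℂ) (k : ℕ) :
    T b (q:ℂ) w (k+1) - T b (q:ℂ) ((q:ℂ)*w) (k+1) =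
      w / (1-b) * T ((q:ℂ)*b) (q:ℂ) ((q:ℂ)^2*w) k := by
  have hq := qfac hq0 hq1
  have hb1 : (1:ℂ) - b ≠ 0 := by simpa using hb 0
  have hb' : ∀ j : ℕ, 1 - ((q:ℂ)*b) * (q:ℂ) ^ j ≠ 0 := by
    intro j
    have := hb (j+1)
    rwa [show b * (q:ℂ)^(j+1) = ((q:ℂ)*b) * (q:ℂ)^j by rw [pow_succ]; ring] at this
  have hqk := qP_ne_zero hq k
  have hbk' := qP_ne_zero hb' k
  unfold T
  rw [qP_succ (q:ℂ) (q:ℂ) k, qP_succ' b (q:ℂ) k, Nat.add_sub_cancel, exp_arith, pow_add]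
  have hqq := hq k
  field_simp [hqq, hb1, hqk, hbk']
  ring


/-- Contiguous relation R3 (termwise). -/
lemma R3_term {b : ℂ} (hq0 : 0 < q) (hq1 : q < 1) (hb : ∀ j : ℕ, 1 - b * (q:ℂ) ^ j ≠ 0)
    (w : ℂ) (k : ℕ) :
    T ((q:ℂ)*b) (q:ℂ) w k = (1-b) * T b (q:ℂ) w k + b * T ((q:ℂ)*b) (q:ℂ) ((q:ℂ)*w) k := by
  have hq := qfac hq0 hq1
  have hb1 : (1:ℂ) - b ≠ 0 := by simpa using hb 0
  have hb' : ∀ j : ℕ, 1 - ((q:ℂ)*b) * (q:ℂ) ^ j ≠ 0 := by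
    intro j
    have := hb (j+1)
    rwa [show b * (q:ℂ)^(j+1) = ((q:ℂ)*b) * (q:ℂ)^j by rw [pow_succ]; ring] at this
  have hqk := qP_ne_zero hq k
  have hbk := qP_ne_zero hb k
  have hbk' := qP_ne_zero hb' k
  have hbkf := hb k
  have ePb : qP b (q:ℂ) k = (1-b) * qP ((q:ℂ)*b) (q:ℂ) k / (1 - b*(q:ℂ)^k) := by
    rw [eq_div_iff hbkf, ← qP_succ, qP_succ']
  unfold T
  rw [ePb]
  field_simp [hb1, hqk, hbk', hbkf]
  ring

/-- Summation form of R1. -/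
lemma R1 {b : ℂ} (hq0 : 0 < q) (hq1 : q < 1) (hb : ∀ j : ℕ, 1 - b * (q:ℂ) ^ j ≠ 0)
    (w : ℂ) :
    phi01 b (q:ℂ) w = phi01 b (q:ℂ) ((q:ℂ)*w) + w/(1-b) * phi01 ((q:ℂ)*b) (q:ℂ) ((q:ℂ)^2*w) := by
  have hb' : ∀ j : ℕ, 1 - ((q:ℂ)*b) * (q:ℂ) ^ j ≠ 0 := by
    intro j
    have := hb (j+1)
    rwa [show b * (q:ℂ)^(j+1) = ((q:ℂ)*b) * (q:ℂ)^j by rw [pow_succ]; ring] at this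
  have S1 := summable_T hq0 hq1 hb w
  have S2 := summable_T hq0 hq1 hb ((q:ℂ)*w)
  have S3 := summable_T hq0 hq1 hb' ((q:ℂ)^2*w)
  have key : phi01 b (q:ℂ) w - phi01 b (q:ℂ) ((q:ℂ)*w)
      = w/(1-b) * phi01 ((q:ℂ)*b) (q:ℂ) ((q:ℂ)^2*w) := by
    rw [phi01_eq, phi01_eq, phi01_eq, ← Summable.tsum_sub S1 S2,
      Summable.tsum_eq_zero_add (S1.sub S2)]
    simp only [T_zero, sub_self, zero_add]
    rw [← tsum_mul_left]
    exact tsum_congr fun k => R1_term hq0 hq1 hb w k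
  linear_combination key

/-- Summation form of R3. -/
lemma R3 {b : ℂ} (hq0 : 0 < q) (hq1 : q < 1) (hb : ∀ j : ℕ, 1 - b * (q:ℂ) ^ j ≠ 0)
    (w : ℂ) :
    phi01 ((q:ℂ)*b) (q:ℂ) w = (1-b) * phi01 b (q:ℂ) w + b * phi01 ((q:ℂ)*b) (q:ℂ) ((q:ℂ)*w) := by
  have hb' : ∀ j : ℕ, 1 - ((q:ℂ)*b) * (q:ℂ) ^ j ≠ 0 := by
    intro j
    have := hb (j+1)
    rwa [show b * (q:ℂ)^(j+1) = ((q:ℂ)*b) * (q:ℂ)^j by rw [pow_succ]; ring] at this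
  have S1 := summable_T hq0 hq1 hb w
  have S2 := summable_T hq0 hq1 hb' ((q:ℂ)*w)
  rw [phi01_eq, phi01_eq, phi01_eq, ← tsum_mul_left, ← tsum_mul_left,
    ← Summable.tsum_add (S1.mul_left _) (S2.mul_left _)]
  exact tsum_congr fun k => R3_term hq0 hq1 hb w k


/-- The building block: ₀φ₁(;b;q,−bz). -/
noncomputable def HH (Q b z : ℂ) : ℂ := phi01 b Q (-(b*z))

/-- The Wronskian-type combination. -/
noncomputable def WW (Q b₁ b₂ z : ℂ) : ℂ :=
  HH Q b₁ z * HH Q b₂ z + z/((1-b₁)*(1-b₂)) * (HH Q (Q*b₁) z * HH Q (Q*b₂) z)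

lemma R1' {b : ℂ} (hq0 : 0 < q) (hq1 : q < 1) (hb : ∀ j : ℕ, 1 - b * (q:ℂ) ^ j ≠ 0)
    (z : ℂ) :
    HH (q:ℂ) b z = HH (q:ℂ) b ((q:ℂ)*z) - b*z/(1-b) * HH (q:ℂ) ((q:ℂ)*b) ((q:ℂ)*z) := by
  have h := R1 hq0 hq1 hb (-(b*z))
  simp only [HH]
  rw [show (q:ℂ)*(-(b*z)) = -(b*((q:ℂ)*z)) by ring,
    show ((q:ℂ)^2)*(-(b*z)) = -(((q:ℂ)*b)*((q:ℂ)*z)) by ring] at h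
  rw [h]
  ring

lemma R3' {b : ℂ} (hq0 : 0 < q) (hq1 : q < 1) (hb : ∀ j : ℕ, 1 - b * (q:ℂ) ^ j ≠ 0)
    (z : ℂ) :
    HH (q:ℂ) ((q:ℂ)*b) z = (1-b) * HH (q:ℂ) b ((q:ℂ)*z) + b * HH (q:ℂ) ((q:ℂ)*b) ((q:ℂ)*z) := by
  have h := R3 hq0 hq1 hb (-(((q:ℂ)*b)*z))
  simp only [HH]
  rw [show -(b*((q:ℂ)*z)) = -((q:ℂ)*b*z) by ring,
    show -((q:ℂ)*b*((q:ℂ)*z)) = (q:ℂ) * -((q:ℂ)*b*z) by ring]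
  exact h

/-- Functional equation for the Wronskian. -/
lemma FE {b₁ b₂ : ℂ} (hq0 : 0 < q) (hq1 : q < 1)
    (h₁ : ∀ j : ℕ, 1 - b₁ * (q:ℂ) ^ j ≠ 0) (h₂ : ∀ j : ℕ, 1 - b₂ * (q:ℂ) ^ j ≠ 0)
    (hb : b₁ * b₂ = (q:ℂ)) (z : ℂ) :
    WW (q:ℂ) b₁ b₂ z = (1+z) * WW (q:ℂ) b₁ b₂ ((q:ℂ)*z) := by
  have e₁ : (1:ℂ) - b₁ ≠ 0 := by simpa using h₁ 0
  have e₂ : (1:ℂ) - b₂ ≠ 0 := by simpa using h₂ 0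
  rw [WW, WW, R1' hq0 hq1 h₁ z, R1' hq0 hq1 h₂ z, R3' hq0 hq1 h₁ z, R3' hq0 hq1 h₂ z]
  rw [show ((q:ℝ):ℂ) = b₁*b₂ from hb.symm]
  field_simp
  ring


/-- Norm bound near 0. -/
lemma phi01_sub_one_bound {b : ℂ} (hq0 : 0 < q) (hq1 : q < 1)
    (hb : ∀ j : ℕ, 1 - b * (q:ℂ) ^ j ≠ 0) (w : ℂ) (hw : ‖w‖ ≤ 1) :
    ‖phi01 b (q:ℂ) w - 1‖ ≤ ‖w‖ * ∑' k, ‖T b (q:ℂ) 1 (k+1)‖ := by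
  have S1 := summable_T hq0 hq1 hb w
  have Sn1 : Summable fun k => ‖T b (q:ℂ) w (k+1)‖ :=
    (summable_nat_add_iff (f := fun n => ‖T b (q:ℂ) w n‖) 1).2 (summable_T_norm hq0 hq1 hb w)
  have Sn2 : Summable fun k => ‖T b (q:ℂ) 1 (k+1)‖ :=
    (summable_nat_add_iff (f := fun n => ‖T b (q:ℂ) 1 n‖) 1).2 (summable_T_norm hq0 hq1 hb 1)
  have h0 : phi01 b (q:ℂ) w - 1 = ∑' k, T b (q:ℂ) w (k+1) := by
    rw [phi01_eq, Summable.tsum_eq_zero_add S1, T_zero]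
    ring
  rw [h0]
  calc ‖∑' k, T b (q:ℂ) w (k+1)‖ ≤ ∑' k, ‖T b (q:ℂ) w (k+1)‖ := norm_tsum_le_tsum_norm Sn1
    _ ≤ ∑' k, ‖w‖ * ‖T b (q:ℂ) 1 (k+1)‖ := by
        apply Summable.tsum_le_tsum _ Sn1 (Sn2.mul_left _)
        intro k
        rw [T_mul_w b (q:ℂ) w (k+1), norm_mul]
        have : ‖w ^ (k+1)‖ ≤ ‖w‖ := by
          rw [norm_pow]
          exact pow_le_of_le_one (norm_nonneg w) hw k.succ_ne_zero
        calc ‖T b (q:ℂ) 1 (k+1)‖ * ‖w ^ (k+1)‖ ≤ ‖T b (q:ℂ) 1 (k+1)‖ * ‖w‖ :=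
              mul_le_mul_of_nonneg_left this (norm_nonneg _)
          _ = ‖w‖ * ‖T b (q:ℂ) 1 (k+1)‖ := by ring
    _ = ‖w‖ * ∑' k, ‖T b (q:ℂ) 1 (k+1)‖ := tsum_mul_left

lemma tendsto_HH {b : ℂ} (hq0 : 0 < q) (hq1 : q < 1)
    (hb : ∀ j : ℕ, 1 - b * (q:ℂ) ^ j ≠ 0) (z : ℂ) :
    Filter.Tendsto (fun n : ℕ => HH (q:ℂ) b ((q:ℂ)^n * z)) Filter.atTop (nhds 1) := by
  have hQnorm : ‖(q:ℂ)‖ < 1 := by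
    rw [Complex.norm_real, Real.norm_eq_abs, abs_of_pos hq0]; exact hq1
  have hw : Filter.Tendsto (fun n : ℕ => -(b * ((q:ℂ)^n * z))) Filter.atTop (nhds 0) := by
    have h1 : Filter.Tendsto (fun n : ℕ => (q:ℂ)^n) Filter.atTop (nhds 0) :=
      tendsto_pow_atTop_nhds_zero_of_norm_lt_one hQnorm
    have := ((h1.mul_const z).const_mul b).neg
    simpa using this
  have hwithin : Filter.Tendsto (fun n : ℕ => ‖-(b * ((q:ℂ)^n * z))‖) Filter.atTop (nhds 0) := by
    simpa using hw.norm
  have hev : ∀ᶠ n : ℕ in Filter.atTop, ‖-(b * ((q:ℂ)^n * z))‖ ≤ 1 :=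
    hwithin.eventually_le_const (by norm_num)
  have hsq : Filter.Tendsto (fun n : ℕ => HH (q:ℂ) b ((q:ℂ)^n * z) - 1) Filter.atTop (nhds 0) := by
    apply squeeze_zero_norm' (a := fun n : ℕ => ‖-(b * ((q:ℂ)^n * z))‖ * ∑' k, ‖T b (q:ℂ) 1 (k+1)‖)
    · filter_upwards [hev] with n hn
      exact phi01_sub_one_bound hq0 hq1 hb _ hn
    · simpa using hwithin.mul_const _
  have := hsq.add_const 1
  simpa using this

/-- Iterated functional equation. -/
lemma iterFE {b₁ b₂ : ℂ} (hq0 : 0 < q) (hq1 : q < 1)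
    (h₁ : ∀ j : ℕ, 1 - b₁ * (q:ℂ) ^ j ≠ 0) (h₂ : ∀ j : ℕ, 1 - b₂ * (q:ℂ) ^ j ≠ 0)
    (hb : b₁ * b₂ = (q:ℂ)) (z : ℂ) (n : ℕ) :
    WW (q:ℂ) b₁ b₂ z
      = (∏ j ∈ Finset.range n, (1 + z * (q:ℂ)^j)) * WW (q:ℂ) b₁ b₂ ((q:ℂ)^n * z) := by
  induction n with
  | zero => simp
  | succ n ih =>
    rw [ih, Finset.prod_range_succ, FE hq0 hq1 h₁ h₂ hb ((q:ℂ)^n * z),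
      show (q:ℂ) * ((q:ℂ)^n * z) = (q:ℂ)^(n+1) * z by rw [pow_succ]; ring]
    ring

/-- Convergence of the partial products. -/
lemma tendsto_prod (hq0 : 0 < q) (hq1 : q < 1) (z : ℂ) :
    Filter.Tendsto (fun n : ℕ => ∏ j ∈ Finset.range n, (1 + z * (q:ℂ)^j)) Filter.atTop
      (nhds (∏' j : ℕ, (1 + z * (q:ℂ)^j))) := by
  have hQnorm : ‖(q:ℂ)‖ < 1 := by
    rw [Complex.norm_real, Real.norm_eq_abs, abs_of_pos hq0]; exact hq1
  by_cases hzero : ∃ j : ℕ, (1:ℂ) + z * (q:ℂ)^j = 0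
  · obtain ⟨j₀, hj₀⟩ := hzero
    have hp : HasProd (fun j : ℕ => 1 + z * (q:ℂ)^j) 0 := by
      rw [HasProd]
      have hev : ∀ᶠ s : Finset ℕ in Filter.atTop,
          (∏ i ∈ s, (1 + z * (q:ℂ)^i)) = 0 := by
        filter_upwards [Filter.eventually_ge_atTop ({j₀} : Finset ℕ)] with s hs
        exact Finset.prod_eq_zero (hs (Finset.mem_singleton_self j₀)) hj₀
      exact Filter.Tendsto.congr' (Filter.EventuallyEq.symm hev) tendsto_const_nhds
    rw [hp.tprod_eq]
    exact hp.tendsto_prod_nat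
  · push_neg at hzero
    have hlog : Summable fun j : ℕ => Complex.log (1 + z * (q:ℂ)^j) := by
      apply Summable.of_norm_bounded_eventually_nat (g := fun j => 3/2 * (‖z‖ * q ^ j))
      · exact ((summable_geometric_of_lt_one hq0.le hq1).mul_left ‖z‖).mul_left _
      · have h1 : Filter.Tendsto (fun j : ℕ => ‖z * (q:ℂ)^j‖) Filter.atTop (nhds 0) := by
          have := (tendsto_pow_atTop_nhds_zero_of_norm_lt_one hQnorm).const_mul z
          simpa using this.norm
        filter_upwards [h1.eventually_le_const (by norm_num : (0:ℝ) < 1/2)] with j hj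
        have := Complex.norm_log_one_add_half_le_self (z := z * (q:ℂ)^j) hj
        calc ‖Complex.log (1 + z * (q:ℂ)^j)‖ ≤ 3/2 * ‖z * (q:ℂ)^j‖ := this
          _ = 3/2 * (‖z‖ * q ^ j) := by
              rw [norm_mul, norm_pow, Complex.norm_real, Real.norm_eq_abs, abs_of_pos hq0]
    have hm : Multipliable fun j : ℕ => 1 + z * (q:ℂ)^j :=
      Complex.multipliable_of_summable_log hlog
    exact hm.hasProd.tendsto_prod_nat


/-- The Wronskian equals the infinite product. -/
lemma WW_eq_prod {b₁ b₂ : ℂ} (hq0 : 0 < q) (hq1 : q < 1)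
    (h₁ : ∀ j : ℕ, 1 - b₁ * (q:ℂ) ^ j ≠ 0) (h₂ : ∀ j : ℕ, 1 - b₂ * (q:ℂ) ^ j ≠ 0)
    (hb : b₁ * b₂ = (q:ℂ)) (z : ℂ) :
    WW (q:ℂ) b₁ b₂ z = ∏' j : ℕ, (1 + z * (q:ℂ)^j) := by
  have h₁' : ∀ j : ℕ, 1 - ((q:ℂ)*b₁) * (q:ℂ) ^ j ≠ 0 := by
    intro j
    have := h₁ (j+1)
    rwa [show b₁ * (q:ℂ)^(j+1) = ((q:ℂ)*b₁) * (q:ℂ)^j by rw [pow_succ]; ring] at this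
  have h₂' : ∀ j : ℕ, 1 - ((q:ℂ)*b₂) * (q:ℂ) ^ j ≠ 0 := by
    intro j
    have := h₂ (j+1)
    rwa [show b₂ * (q:ℂ)^(j+1) = ((q:ℂ)*b₂) * (q:ℂ)^j by rw [pow_succ]; ring] at this
  have hQnorm : ‖(q:ℂ)‖ < 1 := by
    rw [Complex.norm_real, Real.norm_eq_abs, abs_of_pos hq0]; exact hq1
  -- W(qⁿz) → 1
  have hW0 : Filter.Tendsto (fun n : ℕ => WW (q:ℂ) b₁ b₂ ((q:ℂ)^n * z)) Filter.atTop (nhds 1) := by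
    have t1 := tendsto_HH hq0 hq1 h₁ z
    have t2 := tendsto_HH hq0 hq1 h₂ z
    have t3 := tendsto_HH hq0 hq1 h₁' z
    have t4 := tendsto_HH hq0 hq1 h₂' z
    have tz : Filter.Tendsto (fun n : ℕ => ((q:ℂ)^n * z) / ((1-b₁)*(1-b₂)))
        Filter.atTop (nhds 0) := by
      have := ((tendsto_pow_atTop_nhds_zero_of_norm_lt_one hQnorm).mul_const z).div_const
        ((1-b₁)*(1-b₂))
      simpa using this
    have := (t1.mul t2).add ((tz.mul (t3.mul t4)))
    simp only [WW]
    simpa using this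
  have hconst : Filter.Tendsto
      (fun n : ℕ => (∏ j ∈ Finset.range n, (1 + z * (q:ℂ)^j)) * WW (q:ℂ) b₁ b₂ ((q:ℂ)^n * z))
      Filter.atTop (nhds (WW (q:ℂ) b₁ b₂ z)) := by
    apply Filter.Tendsto.congr (fun n => (iterFE hq0 hq1 h₁ h₂ hb z n))
    exact tendsto_const_nhds
  have hlim := (tendsto_prod hq0 hq1 z).mul hW0
  rw [mul_one] at hlim
  exact tendsto_nhds_unique hconst hlim


end Phi01Aux

open Phi01Aux in
theorem phi01_wronskian (q : ℝ) (hq0 : 0 < q) (hq1 : q < 1) (ν z : ℂ)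
    (hν : ∀ k : ℤ, (q : ℂ) ^ ν ≠ (q : ℂ) ^ (k : ℂ)) :
    phi01 ((q : ℂ) ^ (ν + 1)) (q : ℂ) (-(q : ℂ) ^ (ν + 1) * z) *
          phi01 ((q : ℂ) ^ (-ν)) (q : ℂ) (-(q : ℂ) ^ (-ν) * z) -
        (q : ℂ) ^ ν * z / ((1 - (q : ℂ) ^ ν) * (1 - (q : ℂ) ^ (ν + 1))) *
          phi01 ((q : ℂ) ^ (ν + 2)) (q : ℂ) (-(q : ℂ) ^ (ν + 2) * z) *
          phi01 ((q : ℂ) ^ (-ν + 1)) (q : ℂ) (-(q : ℂ) ^ (-ν + 1) * z) =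
      ∏' j : ℕ, (1 + z * (q : ℂ) ^ j) := by
  have hQ0 : (q:ℂ) ≠ 0 := Complex.ofReal_ne_zero.mpr hq0.ne'
  have ha0 : (q:ℂ) ^ ν ≠ 0 := fun h => hQ0 ((Complex.cpow_eq_zero_iff _ _).mp h).1
  have eb₁ : (q:ℂ) ^ (ν+1) = (q:ℂ) ^ ν * (q:ℂ) := by
    rw [Complex.cpow_add _ _ hQ0, Complex.cpow_one]
  have eb₂ : (q:ℂ) ^ (-ν) = ((q:ℂ) ^ ν)⁻¹ := Complex.cpow_neg _ _
  have eb₃ : (q:ℂ) ^ (ν+2) = (q:ℂ) * (q:ℂ) ^ (ν+1) := by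
    rw [show ν+2 = (ν+1)+1 by ring, Complex.cpow_add _ _ hQ0, Complex.cpow_one]
    ring
  have eb₄ : (q:ℂ) ^ (-ν+1) = (q:ℂ) * (q:ℂ) ^ (-ν) := by
    rw [Complex.cpow_add _ _ hQ0, Complex.cpow_one]
    ring
  have key : ∀ m : ℤ, (q:ℂ) ^ ν * (q:ℂ) ^ m ≠ 1 := by
    intro m h
    apply hν (-m)
    rw [Complex.cpow_intCast, zpow_neg]
    exact eq_inv_of_mul_eq_one_left ((mul_comm ((q:ℂ)^ν) _) ▸ h)
  have h₁ : ∀ j : ℕ, 1 - (q:ℂ) ^ (ν+1) * (q:ℂ) ^ j ≠ 0 := by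
    intro j h
    apply key ((j:ℤ)+1)
    have h' : (q:ℂ) ^ (ν+1) * (q:ℂ) ^ j = 1 := (sub_eq_zero.mp h).symm
    rw [eb₁] at h'
    calc (q:ℂ)^ν * (q:ℂ)^((j:ℤ)+1) = ((q:ℂ)^ν * (q:ℂ)) * (q:ℂ)^(j:ℕ) := by
          rw [zpow_add₀ hQ0, zpow_one, zpow_natCast]; ring
      _ = 1 := h'
  have h₂ : ∀ j : ℕ, 1 - (q:ℂ) ^ (-ν) * (q:ℂ) ^ j ≠ 0 := by
    intro j h
    apply key (-(j:ℤ))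
    have h' : ((q:ℂ) ^ ν)⁻¹ * (q:ℂ) ^ j = 1 := by rw [← eb₂]; exact (sub_eq_zero.mp h).symm
    have e : (q:ℂ)^(-(j:ℤ)) = ((q:ℂ)^(j:ℕ))⁻¹ := by rw [zpow_neg, zpow_natCast]
    rw [e]
    have hqj : (q:ℂ)^(j:ℕ) ≠ 0 := pow_ne_zero _ hQ0
    field_simp at h' ⊢
    linear_combination (-1:ℂ) * h'
  have hb : (q:ℂ) ^ (ν+1) * (q:ℂ) ^ (-ν) = (q:ℂ) := by
    rw [eb₁, eb₂]
    field_simp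
  have main := WW_eq_prod hq0 hq1 h₁ h₂ hb z
  simp only [WW, HH] at main
  have hne1 : (1:ℂ) - (q:ℂ)^ν ≠ 0 := by
    intro h
    apply key 0
    rw [zpow_zero, mul_one]
    exact (sub_eq_zero.mp h).symm
  have hne2 : (1:ℂ) - (q:ℂ)^(ν+1) ≠ 0 := by simpa using h₁ 0
  have hne3 : (1:ℂ) - (q:ℂ)^(-ν) ≠ 0 := by simpa using h₂ 0
  have hc : z/((1-(q:ℂ)^(ν+1))*(1-(q:ℂ)^(-ν)))
      = -((q:ℂ)^ν * z/((1-(q:ℂ)^ν)*(1-(q:ℂ)^(ν+1)))) := by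
    rw [eb₂]
    have h4 : (q:ℂ)^ν - 1 ≠ 0 := fun h => hne1 (by linear_combination -h)
    field_simp [ha0, hne1, hne2]
    ring
  rw [hc] at main
  rw [eb₃, eb₄]
  simp only [neg_mul]
  linear_combination main
end

section
/- For 0 < q < 1 and complex z: ∑_{k=0}^{∞} q^{k(k−1)/2} z^k/(q;q)_k = (−z;q)_∞ (Euler's identity), and consequently lim_{M→∞} ∑_{k=0}^{∞} q^{k(k−1)} (−q^{−M} q^{1/2} w²)^k / ((q;q)_k (q^{−M};q)_k) = ∑_{k=0}^{∞} q^{k²/2} w^{2k}/(q;q)_k = (−q^{1/2}w²;q)_∞, the limit taken over positive integers M. -/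
open Filter Finset Topology

open Classical

lemma natEven (k : ℕ) : 2 ∣ k * (k - 1) := by
  rcases k with _ | n
  · simp
  · simpa [Nat.succ_sub_one, Nat.mul_comm] using (Nat.even_mul_succ_self n).two_dvd

lemma natA (k : ℕ) : 2 * (k * (k - 1) / 2) = k * (k - 1) :=
  by have := natEven k; omega

lemma natB (k : ℕ) : k * (k - 1) + k = k ^ 2 := by
  rcases k with _ | n
  · simp
  · simp [Nat.succ_sub_one]; ring

lemma natC (k : ℕ) : (k + 1) * k / 2 = k * (k - 1) / 2 + k := by
  obtain ⟨t, ht⟩ := natEven k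
  have h2 : (k+1) * k = k * (k-1) + 2 * k := by
    rcases k with _ | n
    · simp
    · simp [Nat.succ_sub_one]; ring
  omega

lemma prod_one_sub_ge (t : Finset ℕ) (f : ℕ → ℝ) (h0 : ∀ i ∈ t, 0 ≤ f i)
    (h1 : ∀ i ∈ t, f i ≤ 1) :
    1 - ∑ i ∈ t, f i ≤ ∏ i ∈ t, (1 - f i) := by
  induction t using Finset.cons_induction with
  | empty => simp
  | cons a s ha ih =>
    rw [Finset.prod_cons, Finset.sum_cons]
    have h0a := h0 a (Finset.mem_cons_self ..)
    have h1a := h1 a (Finset.mem_cons_self ..)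
    have ihs := ih (fun i hi => h0 i (Finset.mem_cons_of_mem hi))
      (fun i hi => h1 i (Finset.mem_cons_of_mem hi))
    have hsum : 0 ≤ ∑ i ∈ s, f i :=
      Finset.sum_nonneg (fun i hi => h0 i (Finset.mem_cons_of_mem hi))
    nlinarith

/-- real truncated q-Pochhammer (q;q)_k -/
noncomputable def qp (q : ℝ) (k : ℕ) : ℝ := ∏ j ∈ Finset.range k, (1 - q ^ (j + 1))

lemma qp_pos {q : ℝ} (hq0 : 0 < q) (hq1 : q < 1) (k : ℕ) : 0 < qp q k := by
  refine Finset.prod_pos fun j _ => ?_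
  have : q ^ (j+1) < 1 := pow_lt_one₀ hq0.le hq1 (Nat.succ_ne_zero j)
  linarith

lemma qp_le_one {q : ℝ} (hq0 : 0 < q) (hq1 : q < 1) (k : ℕ) : qp q k ≤ 1 := by
  refine Finset.prod_le_one (fun j _ => ?_) (fun j _ => ?_)
  · have : q ^ (j+1) < 1 := pow_lt_one₀ hq0.le hq1 (Nat.succ_ne_zero j)
    linarith
  · have : 0 < q ^ (j+1) := pow_pos hq0 _
    linarith

lemma qp_lb {q : ℝ} (hq0 : 0 < q) (hq1 : q < 1) :
    ∃ c : ℝ, 0 < c ∧ ∀ a k : ℕ, c ≤ ∏ j ∈ Finset.range k, (1 - q ^ (a + j + 1)) := by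
  obtain ⟨N, hN⟩ : ∃ N : ℕ, q ^ N < (1 - q) / 2 :=
    exists_pow_lt_of_lt_one (by linarith) hq1
  refine ⟨qp q N / 2, by have := qp_pos hq0 hq1 N; linarith, fun a k => ?_⟩
  -- first reduce to a = 0
  have step1 : qp q k ≤ ∏ j ∈ Finset.range k, (1 - q ^ (a + j + 1)) := by
    refine Finset.prod_le_prod (fun j _ => ?_) (fun j _ => ?_)
    · have : q ^ (j+1) < 1 := pow_lt_one₀ hq0.le hq1 (Nat.succ_ne_zero j)
      linarith
    · have : q ^ (a + j + 1) ≤ q ^ (j + 1) :=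
        pow_le_pow_of_le_one hq0.le hq1.le (by omega)
      linarith
  refine le_trans ?_ step1
  -- now show qp q N / 2 ≤ qp q k
  rcases le_or_gt k N with hk | hk
  · have h1 : qp q N ≤ qp q k := by
      have : qp q N = qp q k * ∏ j ∈ Finset.Ico k N, (1 - q ^ (j + 1)) := by
        rw [qp, qp, ← Finset.prod_range_mul_prod_Ico _ hk]
      rw [this]
      have hkpos := qp_pos hq0 hq1 k
      have : ∏ j ∈ Finset.Ico k N, (1 - q ^ (j + 1)) ≤ 1 := by
        refine Finset.prod_le_one (fun j _ => ?_) (fun j _ => ?_)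
        · have : q ^ (j+1) < 1 := pow_lt_one₀ hq0.le hq1 (Nat.succ_ne_zero j)
          linarith
        · have : 0 < q ^ (j+1) := pow_pos hq0 _
          linarith
      nlinarith
    have := qp_pos hq0 hq1 N
    linarith
  · have hsplit : qp q k = qp q N * ∏ j ∈ Finset.Ico N k, (1 - q ^ (j + 1)) := by
      rw [qp, qp, ← Finset.prod_range_mul_prod_Ico _ hk.le]
    have htail : (1:ℝ)/2 ≤ ∏ j ∈ Finset.Ico N k, (1 - q ^ (j + 1)) := by
      have hb : ∑ j ∈ Finset.Ico N k, q ^ (j + 1) ≤ 1/2 := by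
        have : ∑ j ∈ Finset.Ico N k, q ^ (j + 1)
            = q ^ (N+1) * ∑ i ∈ Finset.range (k - N), q ^ i := by
          rw [Finset.sum_Ico_eq_sum_range, Finset.mul_sum]
          exact Finset.sum_congr rfl fun i _ => by rw [← pow_add]; ring_nf
        rw [this]
        have hgeom : ∑ i ∈ Finset.range (k - N), q ^ i ≤ 1 / (1 - q) := by
          rw [geom_sum_eq (by linarith : q ≠ 1)]
          have heq : (q ^ (k - N) - 1) / (q - 1) = (1 - q ^ (k - N)) / (1 - q) := by
            rw [← neg_div_neg_eq]; ring_nf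
          rw [heq, div_le_div_iff₀ (by linarith) (by linarith)]
          have : 0 < q ^ (k - N) := pow_pos hq0 _
          nlinarith
        have hqN : q ^ (N + 1) ≤ q ^ N := pow_le_pow_of_le_one hq0.le hq1.le (by omega)
        have h1q : 0 < 1 - q := by linarith
        calc q ^ (N+1) * ∑ i ∈ Finset.range (k - N), q ^ i
            ≤ q ^ N * (1 / (1 - q)) := by
              refine mul_le_mul hqN hgeom (Finset.sum_nonneg fun i _ => (pow_pos hq0 i).le)
                (pow_pos hq0 N).le
          _ ≤ 1/2 := by
              rw [mul_one_div, div_le_div_iff₀ h1q (by norm_num)]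
              nlinarith
      have := prod_one_sub_ge (Finset.Ico N k) (fun j => q ^ (j+1))
        (fun j _ => (pow_pos hq0 _).le)
        (fun j _ => (pow_le_one₀ hq0.le hq1.le))
      linarith
    have := qp_pos hq0 hq1 N
    rw [hsplit]
    nlinarith

lemma qp_succ (q : ℝ) (k : ℕ) : qp q (k + 1) = qp q k * (1 - q ^ (k + 1)) := by
  rw [qp, qp, Finset.prod_range_succ]

lemma qP_cast (q : ℝ) (k : ℕ) : qP (q:ℂ) (q:ℂ) k = ((qp q k : ℝ) : ℂ) := by
  rw [qP, qp]
  push_cast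
  exact Finset.prod_congr rfl fun j _ => by rw [pow_succ']

/-- real norm-level term -/
noncomputable def bb (q R : ℝ) (k : ℕ) : ℝ := q ^ (k * (k - 1) / 2) * R ^ k / qp q k

lemma bb_nonneg {q : ℝ} (hq0 : 0 < q) (hq1 : q < 1) {R : ℝ} (hR : 0 ≤ R) (k : ℕ) :
    0 ≤ bb q R k := by
  have := qp_pos hq0 hq1 k
  rw [bb]; positivity

lemma bb_succ {q : ℝ} (hq0 : 0 < q) (hq1 : q < 1) (R : ℝ) (k : ℕ) :
    bb q R (k + 1) = (q ^ k * R / (1 - q ^ (k + 1))) * bb q R k := by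
  have h1 : qp q k ≠ 0 := (qp_pos hq0 hq1 k).ne'
  have h2 : (1 : ℝ) - q ^ (k+1) ≠ 0 := by
    have : q ^ (k+1) < 1 := pow_lt_one₀ hq0.le hq1 (Nat.succ_ne_zero k)
    linarith
  rw [bb, bb, qp_succ, Nat.add_sub_cancel, natC, pow_add]
  field_simp
  ring

lemma summable_bb {q : ℝ} (hq0 : 0 < q) (hq1 : q < 1) {R : ℝ} (hR : 0 ≤ R) :
    Summable (bb q R) := by
  refine summable_of_ratio_norm_eventually_le (r := 1/2) (by norm_num) ?_
  have htend : Tendsto (fun k : ℕ => q ^ k * R) atTop (𝓝 0) := by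
    simpa using (tendsto_pow_atTop_nhds_zero_of_lt_one hq0.le hq1).mul_const R
  have hev : ∀ᶠ k : ℕ in atTop, q ^ k * R ≤ (1 - q) / 2 := by
    have h2 : (0:ℝ) < (1 - q)/2 := by linarith
    exact htend.eventually_le_const h2
  filter_upwards [hev] with k hk
  have hqk1 : q ^ (k+1) ≤ q := by
    calc q ^ (k+1) ≤ q ^ 1 := pow_le_pow_of_le_one hq0.le hq1.le (by omega)
    _ = q := pow_one q
  have hpos : 0 < 1 - q ^ (k+1) := by
    have : q ^ (k+1) < 1 := pow_lt_one₀ hq0.le hq1 (Nat.succ_ne_zero k)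
    linarith
  have hfac : 0 ≤ q ^ k * R / (1 - q ^ (k+1)) := by positivity
  have hfac2 : q ^ k * R / (1 - q ^ (k+1)) ≤ 1/2 := by
    rw [div_le_iff₀ hpos]
    nlinarith
  have hb := bb_nonneg hq0 hq1 hR k
  rw [bb_succ hq0 hq1 R k]
  rw [Real.norm_eq_abs, Real.norm_eq_abs, abs_mul, abs_of_nonneg hb,
    abs_of_nonneg hfac]
  nlinarith [abs_nonneg (bb q R k)]

/-- complex Euler term -/
noncomputable def eterm (q : ℝ) (z : ℂ) (k : ℕ) : ℂ :=
  (q:ℂ) ^ (k * (k - 1) / 2) * z ^ k / qP (q:ℂ) (q:ℂ) k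

lemma eterm_norm {q : ℝ} (hq0 : 0 < q) (hq1 : q < 1) (z : ℂ) (k : ℕ) :
    ‖eterm q z k‖ = bb q ‖z‖ k := by
  rw [eterm, bb, qP_cast, norm_div, norm_mul, norm_pow, norm_pow,
    Complex.norm_real, Complex.norm_real, Real.norm_of_nonneg hq0.le,
    Real.norm_of_nonneg (qp_pos hq0 hq1 k).le]

lemma summable_eterm {q : ℝ} (hq0 : 0 < q) (hq1 : q < 1) (z : ℂ) :
    Summable (eterm q z) := by
  refine Summable.of_norm ?_
  have := summable_bb hq0 hq1 (norm_nonneg z)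
  exact this.congr fun k => (eterm_norm hq0 hq1 z k).symm

noncomputable def eF (q : ℝ) (z : ℂ) : ℂ := ∑' k, eterm q z k

lemma eterm_zero (q : ℝ) (z : ℂ) : eterm q z 0 = 1 := by
  simp [eterm, qP]

lemma eterm_rec {q : ℝ} (hq0 : 0 < q) (hq1 : q < 1) (z : ℂ) (k : ℕ) :
    eterm q z (k + 1) = eterm q ((q:ℂ) * z) (k + 1) + z * eterm q ((q:ℂ) * z) k := by
  have hP : qP (q:ℂ) (q:ℂ) k ≠ 0 := by
    rw [qP_cast]
    exact_mod_cast (qp_pos hq0 hq1 k).ne'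
  have hP1 : qP (q:ℂ) (q:ℂ) (k+1) ≠ 0 := by
    rw [qP_cast]
    exact_mod_cast (qp_pos hq0 hq1 (k+1)).ne'
  have hsucc : qP (q:ℂ) (q:ℂ) (k+1) = qP (q:ℂ) (q:ℂ) k * (1 - (q:ℂ) ^ (k+1)) := by
    rw [qP, qP, Finset.prod_range_succ, pow_succ']
  have h2 : (1 : ℂ) - (q:ℂ) ^ (k+1) ≠ 0 := by
    intro h
    apply hP1
    rw [hsucc, h, mul_zero]
  rw [eterm, eterm, eterm, Nat.add_sub_cancel, natC, pow_add, hsucc]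
  field_simp
  ring

lemma eF_funeq {q : ℝ} (hq0 : 0 < q) (hq1 : q < 1) (z : ℂ) :
    eF q z = (1 + z) * eF q ((q:ℂ) * z) := by
  have S := summable_eterm hq0 hq1 z
  have Sq := summable_eterm hq0 hq1 ((q:ℂ) * z)
  have Sq1 : Summable (fun k => eterm q ((q:ℂ) * z) (k + 1)) :=
    (summable_nat_add_iff 1).mpr Sq
  have Sq2 : Summable (fun k => z * eterm q ((q:ℂ) * z) k) := Sq.mul_left z
  have h1 : eF q z = 1 + ∑' k, eterm q z (k + 1) := by
    rw [eF, S.tsum_eq_zero_add, eterm_zero]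
  have h2 : eF q ((q:ℂ) * z) = 1 + ∑' k, eterm q ((q:ℂ) * z) (k + 1) := by
    rw [eF, Sq.tsum_eq_zero_add, eterm_zero]
  calc eF q z = 1 + ∑' k, eterm q z (k + 1) := h1
    _ = 1 + ∑' k, (eterm q ((q:ℂ) * z) (k + 1) + z * eterm q ((q:ℂ) * z) k) := by
        rw [tsum_congr (fun k => eterm_rec hq0 hq1 z k)]
    _ = 1 + ((∑' k, eterm q ((q:ℂ) * z) (k + 1)) + ∑' k, z * eterm q ((q:ℂ) * z) k) := by
        rw [Sq1.tsum_add Sq2]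
    _ = (1 + ∑' k, eterm q ((q:ℂ) * z) (k + 1)) + z * ∑' k, eterm q ((q:ℂ) * z) k := by
        rw [tsum_mul_left]; ring
    _ = (1 + z) * eF q ((q:ℂ) * z) := by
        rw [← h2, eF]; ring

lemma eF_iter {q : ℝ} (hq0 : 0 < q) (hq1 : q < 1) (z : ℂ) (n : ℕ) :
    eF q z = (∏ j ∈ Finset.range n, (1 + z * (q:ℂ) ^ j)) * eF q ((q:ℂ) ^ n * z) := by
  induction n with
  | zero => simp
  | succ n ih =>
    rw [ih, Finset.prod_range_succ, eF_funeq hq0 hq1 ((q:ℂ) ^ n * z)]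
    rw [mul_assoc]
    congr 1
    rw [show (q:ℂ) * ((q:ℂ) ^ n * z) = (q:ℂ) ^ (n+1) * z by ring]
    ring

lemma eF_tail {q : ℝ} (hq0 : 0 < q) (hq1 : q < 1) (z : ℂ) :
    Tendsto (fun n : ℕ => eF q ((q:ℂ) ^ n * z)) atTop (𝓝 1) := by
  rw [tendsto_iff_norm_sub_tendsto_zero]
  have Sb : Summable (fun k => bb q ‖z‖ (k + 1)) :=
    (summable_nat_add_iff 1).mpr (summable_bb hq0 hq1 (norm_nonneg z))
  set S : ℝ := ∑' k, bb q ‖z‖ (k + 1) with hS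
  have hSnn : 0 ≤ S := tsum_nonneg fun k => bb_nonneg hq0 hq1 (norm_nonneg z) _
  have key : ∀ n : ℕ, ‖eF q ((q:ℂ) ^ n * z) - 1‖ ≤ q ^ n * S := by
    intro n
    set u : ℂ := (q:ℂ) ^ n * z with hu
    have Su := summable_eterm hq0 hq1 u
    have h1 : eF q u - 1 = ∑' k, eterm q u (k + 1) := by
      rw [eF, Su.tsum_eq_zero_add, eterm_zero]; ring
    rw [h1]
    have hb : ∀ k : ℕ, ‖eterm q u (k + 1)‖ ≤ q ^ n * bb q ‖z‖ (k + 1) := by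
      intro k
      rw [eterm_norm hq0 hq1 u]
      rw [bb, bb]
      have hnu : ‖u‖ = q ^ n * ‖z‖ := by
        rw [hu, norm_mul, norm_pow, Complex.norm_real, Real.norm_of_nonneg hq0.le]
      rw [hnu, mul_pow]
      have hqp := qp_pos hq0 hq1 (k + 1)
      rw [div_le_iff₀ hqp, mul_assoc, div_mul_cancel₀ _ hqp.ne']
      have hpow : (q ^ n) ^ (k+1) ≤ q ^ n := by
        calc (q ^ n) ^ (k+1) = q ^ (n * (k+1)) := by rw [← pow_mul]
          _ ≤ q ^ n := pow_le_pow_of_le_one hq0.le hq1.le (by nlinarith)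
      have h0 : (0:ℝ) ≤ q ^ (k * (k+1-1) / 2) * ‖z‖ ^ (k+1) := by positivity
      calc q ^ ((k+1) * (k+1-1) / 2) * ((q^n)^(k+1) * ‖z‖^(k+1))
          = (q^n)^(k+1) * (q ^ ((k+1) * (k+1-1)/2) * ‖z‖^(k+1)) := by ring
        _ ≤ q^n * (q ^ ((k+1) * (k+1-1)/2) * ‖z‖^(k+1)) := by
            have : (0:ℝ) ≤ q ^ ((k+1) * (k+1-1)/2) * ‖z‖^(k+1) := by positivity
            nlinarith
    calc ‖∑' k, eterm q u (k + 1)‖ ≤ ∑' k, ‖eterm q u (k + 1)‖ := by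
          refine norm_tsum_le_tsum_norm ?_
          refine (Sb.mul_left (q ^ n)).of_nonneg_of_le (fun k => norm_nonneg _) hb
      _ ≤ ∑' k, q ^ n * bb q ‖z‖ (k + 1) := by
          refine Summable.tsum_le_tsum hb ?_ (Sb.mul_left (q^n))
          refine (Sb.mul_left (q ^ n)).of_nonneg_of_le (fun k => norm_nonneg _) hb
      _ = q ^ n * S := by rw [tsum_mul_left]
  have hlim : Tendsto (fun n : ℕ => q ^ n * S) atTop (𝓝 0) := by
    simpa using (tendsto_pow_atTop_nhds_zero_of_lt_one hq0.le hq1).mul_const S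
  exact squeeze_zero (fun n => norm_nonneg _) key hlim

lemma prod_tendsto {q : ℝ} (hq0 : 0 < q) (hq1 : q < 1) (z : ℂ) :
    Tendsto (fun n : ℕ => ∏ j ∈ Finset.range n, (1 + z * (q:ℂ) ^ j)) atTop
      (𝓝 (∏' j : ℕ, (1 + z * (q:ℂ) ^ j))) := by
  by_cases hzero : ∃ j : ℕ, 1 + z * (q:ℂ) ^ j = 0
  · obtain ⟨j₀, hj₀⟩ := hzero
    have hP : HasProd (fun j : ℕ => 1 + z * (q:ℂ) ^ j) 0 := by
      rw [HasProd]
      have hev : ∀ᶠ s : Finset ℕ in atTop, ∏ j ∈ s, (1 + z * (q:ℂ)^j) = 0 := by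
        filter_upwards [eventually_ge_atTop ({j₀} : Finset ℕ)] with s hs
        exact Finset.prod_eq_zero (hs (Finset.mem_singleton_self j₀)) hj₀
      exact Tendsto.congr' (hev.mono fun s h => h.symm) tendsto_const_nhds
    rw [hP.tprod_eq]
    have hev : ∀ᶠ n : ℕ in atTop, ∏ j ∈ Finset.range n, (1 + z * (q:ℂ)^j) = 0 := by
      filter_upwards [eventually_ge_atTop (j₀+1)] with n hn
      exact Finset.prod_eq_zero (Finset.mem_range.2 (by omega)) hj₀
    exact Tendsto.congr' (hev.mono fun n h => h.symm) tendsto_const_nhds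
  · push_neg at hzero
    have hnorm : ∀ j : ℕ, ‖z * (q:ℂ)^j‖ = ‖z‖ * q ^ j := by
      intro j
      rw [norm_mul, norm_pow, Complex.norm_real, Real.norm_of_nonneg hq0.le]
    have hlog : Summable (fun j : ℕ => Complex.log (1 + z * (q:ℂ)^j)) := by
      have hs : Summable (fun j : ℕ => 3/2 * ‖z‖ * q ^ j) := by
        exact (summable_geometric_of_lt_one hq0.le hq1).mul_left _
      refine hs.of_norm_bounded_eventually ?_
      rw [Nat.cofinite_eq_atTop]
      have htends : Tendsto (fun j : ℕ => ‖z * (q:ℂ)^j‖) atTop (𝓝 0) := by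
        simp only [hnorm]
        simpa using (tendsto_pow_atTop_nhds_zero_of_lt_one hq0.le hq1).const_mul ‖z‖
      filter_upwards [htends.eventually_le_const (by norm_num : (0:ℝ) < 1/2)] with j hj
      calc ‖Complex.log (1 + z * (q:ℂ)^j)‖ ≤ 3/2 * ‖z * (q:ℂ)^j‖ :=
            Complex.norm_log_one_add_half_le_self hj
        _ = 3/2 * ‖z‖ * q^j := by rw [hnorm]; ring
    have hm : Multipliable fun j : ℕ => 1 + z*(q:ℂ)^j :=
      Complex.multipliable_of_summable_log hlog
    exact hm.hasProd.tendsto_prod_nat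

lemma euler_id {q : ℝ} (hq0 : 0 < q) (hq1 : q < 1) (z : ℂ) :
    ∑' k : ℕ, (q : ℂ) ^ (k * (k - 1) / 2) * z ^ k / qP (q : ℂ) (q : ℂ) k
      = ∏' j : ℕ, (1 + z * (q : ℂ) ^ j) := by
  have h1 : Tendsto (fun n : ℕ =>
      (∏ j ∈ Finset.range n, (1 + z * (q:ℂ) ^ j)) * eF q ((q:ℂ) ^ n * z)) atTop
      (𝓝 ((∏' j : ℕ, (1 + z * (q:ℂ) ^ j)) * 1)) :=
    (prod_tendsto hq0 hq1 z).mul (eF_tail hq0 hq1 z)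
  have h2 : (fun n : ℕ =>
      (∏ j ∈ Finset.range n, (1 + z * (q:ℂ) ^ j)) * eF q ((q:ℂ) ^ n * z))
      = fun _ => eF q z := funext fun n => (eF_iter hq0 hq1 z n).symm
  rw [h2] at h1
  have := tendsto_nhds_unique h1 tendsto_const_nhds
  rw [mul_one] at this
  rw [this]
  rfl

lemma prod_zpow_eq (Q : ℂ) (hQ : Q ≠ 0) (f : ℕ → ℤ) (k : ℕ) :
    ∏ j ∈ Finset.range k, Q ^ (f j) = Q ^ (∑ j ∈ Finset.range k, f j) := by
  induction k with
  | zero => simp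
  | succ k ih => rw [Finset.prod_range_succ, Finset.sum_range_succ, ih, zpow_add₀ hQ]

noncomputable def BB (q : ℝ) (M k : ℕ) : ℂ :=
  ∏ j ∈ Finset.range k, (1 - (q:ℂ) ^ ((j:ℤ) - (M:ℤ)))

noncomputable def CCC (q : ℝ) (M k : ℕ) : ℂ :=
  ∏ j ∈ Finset.range k, (1 - (q:ℂ) ^ ((M:ℤ) - (j:ℤ)))

lemma sum_jm (M k : ℕ) :
    ∑ j ∈ Finset.range k, ((j:ℤ) - (M:ℤ)) = ((k * (k-1) / 2 : ℕ) : ℤ) - (M:ℤ) * k := by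
  rw [Finset.sum_sub_distrib, Finset.sum_const, Finset.card_range]
  have h1 : ∑ j ∈ Finset.range k, (j:ℤ) = ((∑ j ∈ Finset.range k, j : ℕ) : ℤ) := by
    push_cast; rfl
  rw [h1, Finset.sum_range_id]
  push_cast
  ring

lemma BB_eq {q : ℝ} (hq0 : 0 < q) (M k : ℕ) :
    BB q M k = (-1)^k * (q:ℂ) ^ (∑ j ∈ Finset.range k, ((j:ℤ) - (M:ℤ))) * CCC q M k := by
  have hQ : (q:ℂ) ≠ 0 := by exact_mod_cast hq0.ne'
  have hfac : ∀ j : ℕ, (1 : ℂ) - (q:ℂ) ^ ((j:ℤ) - (M:ℤ))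
      = (-1 * (q:ℂ) ^ ((j:ℤ) - (M:ℤ))) * (1 - (q:ℂ) ^ ((M:ℤ) - (j:ℤ))) := by
    intro j
    have : (q:ℂ) ^ ((j:ℤ) - (M:ℤ)) * (q:ℂ) ^ ((M:ℤ) - (j:ℤ)) = 1 := by
      rw [← zpow_add₀ hQ]
      norm_num
    calc (1 : ℂ) - (q:ℂ) ^ ((j:ℤ) - (M:ℤ))
        = -1 * ((q:ℂ)^((j:ℤ)-(M:ℤ)) - (q:ℂ)^((j:ℤ)-(M:ℤ)) * (q:ℂ)^((M:ℤ)-(j:ℤ))) := by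
          rw [this]; ring
      _ = (-1 * (q:ℂ) ^ ((j:ℤ) - (M:ℤ))) * (1 - (q:ℂ) ^ ((M:ℤ) - (j:ℤ))) := by ring
  rw [BB, Finset.prod_congr rfl (fun j _ => hfac j), Finset.prod_mul_distrib,
    Finset.prod_mul_distrib, Finset.prod_const, Finset.card_range,
    prod_zpow_eq _ hQ]
  rfl

lemma key_pow {σ : ℂ} (hσ : σ ≠ 0) (M k : ℕ) :
    (σ^2)^(k*(k-1)) * ((σ^2)^(-(M:ℤ)))^k * σ^k
      = σ^(k^2) * (σ^2) ^ (((k * (k-1) / 2 : ℕ) : ℤ) - (M:ℤ) * (k:ℤ)) := by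
  have f1 : (σ^2)^(k*(k-1)) = σ ^ ((2 * (k*(k-1)) : ℕ) : ℤ) := by
    rw [← pow_mul, zpow_natCast]
  have f2 : ((σ^2)^(-(M:ℤ)))^k = σ ^ ((2:ℤ) * (-(M:ℤ)) * (k:ℤ)) := by
    have h2 : (σ^2)^(-(M:ℤ)) = σ ^ ((2:ℤ) * -(M:ℤ)) := by
      rw [← zpow_natCast σ 2, ← zpow_mul]; norm_num
    rw [h2, ← zpow_natCast (σ ^ ((2:ℤ) * -(M:ℤ))) k, ← zpow_mul]
  have f3 : σ^k = σ ^ ((k:ℕ):ℤ) := (zpow_natCast σ k).symm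
  have f4 : σ^(k^2) = σ ^ ((k^2:ℕ):ℤ) := (zpow_natCast σ (k^2)).symm
  have f5 : (σ^2) ^ (((k * (k-1) / 2 : ℕ) : ℤ) - (M:ℤ) * (k:ℤ))
      = σ ^ ((2:ℤ) * ((((k * (k-1) / 2 : ℕ)) : ℤ) - (M:ℤ) * (k:ℤ))) := by
    rw [← zpow_natCast σ 2, ← zpow_mul]
    norm_num
  rw [f1, f2, f3, f4, f5, ← zpow_add₀ hσ, ← zpow_add₀ hσ, ← zpow_add₀ hσ]
  congr 1
  have ha : ((k*(k-1) : ℕ) : ℤ) = 2 * ((k*(k-1)/2 : ℕ) : ℤ) := by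
    have := natA k; exact_mod_cast (by omega : (k*(k-1):ℕ) = 2 * (k*(k-1)/2))
  have hb : ((k^2 : ℕ) : ℤ) = ((k*(k-1) : ℕ) : ℤ) + (k:ℤ) := by
    exact_mod_cast (natB k).symm
  have hc : ((2 * (k*(k-1)) : ℕ) : ℤ) = 2 * ((k*(k-1) : ℕ) : ℤ) := by push_cast; ring
  rw [hc, hb, ha]
  ring

lemma real_pow_id {q : ℝ} (hq0 : 0 ≤ q) (R : ℝ) (k : ℕ) :
    q ^ (k*(k-1)/2) * (Real.sqrt q * R) ^ k = (Real.sqrt q) ^ (k^2) * R ^ k := by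
  have h1 : q ^ (k*(k-1)/2) = (Real.sqrt q) ^ (2*(k*(k-1)/2)) := by
    rw [pow_mul, Real.sq_sqrt hq0]
  rw [mul_pow, h1, natA, ← mul_assoc, ← pow_add, natB]

lemma cplx_pow_id {q : ℝ} (hq0 : 0 ≤ q) (R : ℂ) (k : ℕ) :
    (q:ℂ) ^ (k*(k-1)/2) * ((Real.sqrt q : ℂ) * R) ^ k
      = (Real.sqrt q : ℂ) ^ (k^2) * R ^ k := by
  have hσ2 : ((Real.sqrt q : ℂ))^2 = (q:ℂ) := by
    rw [← Complex.ofReal_pow, Real.sq_sqrt hq0]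
  have h1 : (q:ℂ) ^ (k*(k-1)/2) = ((Real.sqrt q : ℂ)) ^ (2*(k*(k-1)/2)) := by
    rw [pow_mul, hσ2]
  rw [mul_pow, h1, natA, ← mul_assoc, ← pow_add, natB]

lemma term_eq {q : ℝ} (hq0 : 0 < q) (hq1 : q < 1) (w : ℂ) (M k : ℕ) :
    (q:ℂ) ^ (k * (k-1)) * (-(q:ℂ) ^ (-(M:ℤ)) * (Real.sqrt q:ℂ) * w^2)^k /
      (qP (q:ℂ) (q:ℂ) k * BB q M k)
    = (Real.sqrt q:ℂ)^(k^2) * w^(2*k) / (qP (q:ℂ) (q:ℂ) k * CCC q M k) := by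
  have hQ : (q:ℂ) ≠ 0 := by exact_mod_cast hq0.ne'
  have hσ : (Real.sqrt q : ℂ) ≠ 0 := by
    exact_mod_cast (Real.sqrt_pos.mpr hq0).ne'
  have hσ2 : ((Real.sqrt q : ℂ))^2 = (q:ℂ) := by
    rw [← Complex.ofReal_pow, Real.sq_sqrt hq0.le]
  have hA : qP (q:ℂ) (q:ℂ) k ≠ 0 := by
    rw [qP_cast]
    exact_mod_cast (qp_pos hq0 hq1 k).ne'
  have hkp : (q:ℂ)^(k*(k-1)) * ((q:ℂ)^(-(M:ℤ)))^k * (Real.sqrt q:ℂ)^k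
      = (Real.sqrt q:ℂ)^(k^2) * (q:ℂ) ^ (((k * (k-1) / 2 : ℕ) : ℤ) - (M:ℤ) * (k:ℤ)) := by
    rw [← hσ2]
    exact key_pow hσ M k
  by_cases hC : CCC q M k = 0
  · rw [BB_eq hq0, hC]
    simp
  · have hnum : (q:ℂ)^(k*(k-1)) * (-(q:ℂ)^(-(M:ℤ)) * (Real.sqrt q:ℂ) * w^2)^k
        = (Real.sqrt q:ℂ)^(k^2) * w^(2*k)
          * ((-1)^k * (q:ℂ)^(∑ j ∈ Finset.range k, ((j:ℤ)-(M:ℤ)))) := by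
      have hx : (-(q:ℂ)^(-(M:ℤ)) * (Real.sqrt q:ℂ) * w^2)
          = (-1) * ((q:ℂ)^(-(M:ℤ))) * (Real.sqrt q:ℂ) * w^2 := by ring
      rw [hx, mul_pow, mul_pow, mul_pow, sum_jm]
      calc (q:ℂ)^(k*(k-1)) * (((-1:ℂ))^k * (((q:ℂ)^(-(M:ℤ)))^k) * (Real.sqrt q:ℂ)^k
              * (w^2)^k)
          = ((q:ℂ)^(k*(k-1)) * (((q:ℂ)^(-(M:ℤ)))^k) * (Real.sqrt q:ℂ)^k)
              * ((-1:ℂ)^k * (w^2)^k) := by ring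
        _ = ((Real.sqrt q:ℂ)^(k^2)
              * (q:ℂ) ^ (((k * (k-1) / 2 : ℕ) : ℤ) - (M:ℤ) * (k:ℤ)))
              * ((-1:ℂ)^k * (w^2)^k) := by rw [hkp]
        _ = (Real.sqrt q:ℂ)^(k^2) * w^(2*k)
              * ((-1:ℂ)^k * (q:ℂ) ^ (((k * (k-1) / 2 : ℕ) : ℤ) - (M:ℤ) * (k:ℤ))) := by
            rw [pow_mul]; ring
    have he : (q:ℂ) ^ (∑ j ∈ Finset.range k, ((j:ℤ)-(M:ℤ))) ≠ 0 := zpow_ne_zero _ hQ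
    rw [BB_eq hq0, div_eq_div_iff
      (mul_ne_zero hA (mul_ne_zero (mul_ne_zero (pow_ne_zero k (by norm_num)) he) hC))
      (mul_ne_zero hA hC), hnum, sum_jm]
    ring

lemma CCC_zero (q : ℝ) {M k : ℕ} (h : M < k) : CCC q M k = 0 := by
  refine Finset.prod_eq_zero (Finset.mem_range.2 h) ?_
  rw [sub_self, zpow_zero, sub_self]

lemma CCC_cast {q : ℝ} (hq0 : 0 < q) {M k : ℕ} (hkM : k ≤ M) :
    CCC q M k = ((∏ j ∈ Finset.range k, (1 - q ^ (M - j)) : ℝ) : ℂ) := by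
  rw [CCC]
  push_cast
  refine Finset.prod_congr rfl fun j hj => ?_
  have hj' : j < k := Finset.mem_range.1 hj
  have : (M:ℤ) - (j:ℤ) = ((M - j : ℕ) : ℤ) := by omega
  rw [this, zpow_natCast]

lemma CCC_real_lb {q : ℝ} (hq0 : 0 < q) (hq1 : q < 1) {c : ℝ}
    (hc : ∀ a k : ℕ, c ≤ ∏ j ∈ Finset.range k, (1 - q ^ (a + j + 1)))
    {M k : ℕ} (hkM : k ≤ M) :
    c ≤ ∏ j ∈ Finset.range k, (1 - q ^ (M - j)) := by
  have hre : ∏ j ∈ Finset.range k, (1 - q ^ (M - j))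
      = ∏ j ∈ Finset.range k, (1 - q ^ ((M - k) + j + 1)) := by
    rw [← Finset.prod_range_reflect (fun j => (1 - q ^ (M - j))) k]
    refine Finset.prod_congr rfl fun j hj => ?_
    have hj' : j < k := Finset.mem_range.1 hj
    have heq : M - (k - 1 - j) = (M - k) + j + 1 := by omega
    rw [heq]
  rw [hre]
  exact hc (M - k) k

lemma CCC_tendsto {q : ℝ} (hq0 : 0 < q) (hq1 : q < 1) (k : ℕ) :
    Tendsto (fun M : ℕ => CCC q M k) atTop (𝓝 1) := by
  have hQ : (q:ℂ) ≠ 0 := by exact_mod_cast hq0.ne'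
  have h1 : (1:ℂ) = ∏ _j ∈ Finset.range k, (1:ℂ) := by simp
  rw [h1]
  refine tendsto_finset_prod _ fun j _ => ?_
  have hfac : ∀ M : ℕ, (1:ℂ) - (q:ℂ) ^ ((M:ℤ) - (j:ℤ))
      = 1 - ((q:ℂ)^M) * ((q:ℂ)^j)⁻¹ := by
    intro M
    rw [zpow_sub₀ hQ, zpow_natCast, zpow_natCast, div_eq_mul_inv]
  simp only [hfac]
  have hpow : Tendsto (fun M : ℕ => (q:ℂ)^M * ((q:ℂ)^j)⁻¹) atTop (𝓝 0) := by
    have h0 : Tendsto (fun M : ℕ => (q:ℂ)^M) atTop (𝓝 0) := by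
      refine tendsto_pow_atTop_nhds_zero_of_norm_lt_one ?_
      rw [Complex.norm_real, Real.norm_of_nonneg hq0.le]
      exact hq1
    simpa using h0.mul_const ((q:ℂ)^j)⁻¹
  simpa using tendsto_const_nhds.sub hpow

lemma part2_tendsto {q : ℝ} (hq0 : 0 < q) (hq1 : q < 1) (w : ℂ) :
    Tendsto (fun M : ℕ => ∑' k : ℕ, (Real.sqrt q:ℂ)^(k^2) * w^(2*k)
        / (qP (q:ℂ) (q:ℂ) k * CCC q M k)) atTop
      (𝓝 (∑' k : ℕ, (Real.sqrt q:ℂ)^(k^2) * w^(2*k) / qP (q:ℂ) (q:ℂ) k)) := by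
  obtain ⟨c, hcpos, hc⟩ := qp_lb hq0 hq1
  have hs0 : 0 < Real.sqrt q := Real.sqrt_pos.mpr hq0
  have hXnorm : ∀ k : ℕ, ‖(Real.sqrt q:ℂ)^(k^2) * w^(2*k)‖
      = (Real.sqrt q)^(k^2) * ‖w‖^(2*k) := by
    intro k
    rw [norm_mul, norm_pow, norm_pow, Complex.norm_real, Real.norm_of_nonneg hs0.le]
  have hbbeq : ∀ k : ℕ, bb q (Real.sqrt q * ‖w‖^2) k
      = (Real.sqrt q)^(k^2) * ‖w‖^(2*k) / qp q k := by
    intro k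
    rw [bb, real_pow_id hq0.le (‖w‖^2) k, ← pow_mul]
  refine tendsto_tsum_of_dominated_convergence
    (bound := fun k => bb q (Real.sqrt q * ‖w‖^2) k / c)
    ((summable_bb hq0 hq1 (by positivity)).div_const c) (fun k => ?_) ?_
  · -- pointwise limit
    have hA : qP (q:ℂ) (q:ℂ) k ≠ 0 := by
      rw [qP_cast]
      exact_mod_cast (qp_pos hq0 hq1 k).ne'
    have hden : Tendsto (fun M : ℕ => qP (q:ℂ) (q:ℂ) k * CCC q M k) atTop
        (𝓝 (qP (q:ℂ) (q:ℂ) k * 1)) :=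
      tendsto_const_nhds.mul (CCC_tendsto hq0 hq1 k)
    have := Filter.Tendsto.div
      (tendsto_const_nhds : Tendsto (fun _ : ℕ => (Real.sqrt q:ℂ)^(k^2) * w^(2*k))
        atTop _) hden (by rw [mul_one]; exact hA)
    simpa [Pi.div_def] using this
  · refine Filter.Eventually.of_forall (fun M k => ?_)
    rcases lt_or_ge M k with h | hkM
    · rw [CCC_zero q h, mul_zero, div_zero, norm_zero]
      exact div_nonneg (bb_nonneg hq0 hq1 (by positivity) k) hcpos.le
    · have hP : c ≤ ∏ j ∈ Finset.range k, (1 - q ^ (M - j)) :=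
        CCC_real_lb hq0 hq1 hc hkM
      have hPpos : (0:ℝ) < ∏ j ∈ Finset.range k, (1 - q ^ (M - j)) :=
        lt_of_lt_of_le hcpos hP
      have hqp := qp_pos hq0 hq1 k
      show _ ≤ bb q (Real.sqrt q * ‖w‖^2) k / c
      rw [norm_div, CCC_cast hq0 hkM, qP_cast, hXnorm k, norm_mul, Complex.norm_real,
        Complex.norm_real, Real.norm_of_nonneg hqp.le, Real.norm_of_nonneg hPpos.le,
        hbbeq, div_div]
      gcongr

theorem euler_identity_and_limit (q : ℝ) (hq0 : 0 < q) (hq1 : q < 1) (w : ℂ) :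
    (∀ z : ℂ, ∑' k : ℕ, (q : ℂ) ^ (k * (k - 1) / 2) * z ^ k / qP (q : ℂ) (q : ℂ) k
        = ∏' j : ℕ, (1 + z * (q : ℂ) ^ j)) ∧
      Filter.Tendsto (fun M : ℕ =>
          ∑' k : ℕ, (q : ℂ) ^ (k * (k - 1)) *
              (-(q : ℂ) ^ (-(M : ℤ)) * (Real.sqrt q : ℂ) * w ^ 2) ^ k /
            (qP (q : ℂ) (q : ℂ) k * ∏ j ∈ Finset.range k, (1 - (q : ℂ) ^ ((j : ℤ) - (M : ℤ)))))
        Filter.atTop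
        (nhds (∑' k : ℕ, (Real.sqrt q : ℂ) ^ (k ^ 2) * w ^ (2 * k) / qP (q : ℂ) (q : ℂ) k)) ∧
      (∑' k : ℕ, (Real.sqrt q : ℂ) ^ (k ^ 2) * w ^ (2 * k) / qP (q : ℂ) (q : ℂ) k
        = ∏' j : ℕ, (1 + (Real.sqrt q : ℂ) * w ^ 2 * (q : ℂ) ^ j)) := by
  refine ⟨fun z => euler_id hq0 hq1 z, ?_, ?_⟩
  · have heq : (fun M : ℕ => ∑' k : ℕ, (q : ℂ) ^ (k * (k - 1)) *
          (-(q : ℂ) ^ (-(M : ℤ)) * (Real.sqrt q : ℂ) * w ^ 2) ^ k /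
            (qP (q : ℂ) (q : ℂ) k *
              ∏ j ∈ Finset.range k, (1 - (q : ℂ) ^ ((j : ℤ) - (M : ℤ)))))
        = fun M : ℕ => ∑' k : ℕ, (Real.sqrt q : ℂ) ^ (k ^ 2) * w ^ (2 * k)
            / (qP (q : ℂ) (q : ℂ) k * CCC q M k) := by
      funext M
      exact tsum_congr fun k => term_eq hq0 hq1 w M k
    rw [heq]
    exact part2_tendsto hq0 hq1 w
  · have h := euler_id hq0 hq1 ((Real.sqrt q : ℂ) * w ^ 2)
    have h2 : ∑' k : ℕ, (Real.sqrt q : ℂ) ^ (k ^ 2) * w ^ (2 * k) / qP (q : ℂ) (q : ℂ) k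
        = ∑' k : ℕ, (q : ℂ) ^ (k * (k - 1) / 2) * ((Real.sqrt q : ℂ) * w ^ 2) ^ k
            / qP (q : ℂ) (q : ℂ) k :=
      tsum_congr fun k => by rw [pow_mul, ← cplx_pow_id hq0.le (w ^ 2) k]
    rw [h2, h]
end
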